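/- Let H be a Hopf algebra over a commutative ring k with multiplication μ, unit map η, coproduct Δ, counit ε and antipode S, and let F be a Drinfel'd twist on H. Set β := μ((id⊗S)(F)) and β' := μ((S⊗id)(F⁻¹)), so that β·β' = 1 = β'·β, and define the twisted antipode S_F: H → H by S_F(ξ) := β·S(ξ)·β'. Then S_F is an antipode for the twisted bialgebra (H, Δ_F, ε): μ∘(S_F⊗id)∘Δ_F = η∘ε = μ∘(id⊗S_F)∘Δ_F. Consequently (H, μ, η, Δ_F, ε, S_F) is a Hopf algebra. -/

import Mathlib

/-!
STATEMENT 8: For a Drinfel'd twist `F` on a Hopf algebra `H`, the twisted antipode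
`S_F(ξ) := β · S(ξ) · β'` (with `β = μ((id⊗S)(F))`, `β' = μ((S⊗id)(F⁻¹))`) is an
antipode for the twisted bialgebra `(H, Δ_F, ε)`, i.e.
`μ∘(S_F⊗id)∘Δ_F = η∘ε = μ∘(id⊗S_F)∘Δ_F`; hence `(H, μ, η, Δ_F, ε, S_F)` is a Hopf
algebra.
-/

open TensorProduct

noncomputable section

namespace Stmt

variable (R : Type*) [CommRing R] (H : Type*) [Ring H] [HopfAlgebra R H]

/-- Comultiplication as an algebra homomorphism. -/
def Δ : H →ₐ[R] H ⊗[R] H := Bialgebra.comulAlgHom R H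

/-- Counit as an algebra homomorphism. -/
def ε : H →ₐ[R] R := Bialgebra.counitAlgHom R H

/-- Leg embedding `x ↦ x₁₂` of `H ⊗ H` into `H ⊗ H ⊗ H`. -/
def ι₁₂ : H ⊗[R] H →ₐ[R] H ⊗[R] (H ⊗[R] H) :=
  Algebra.TensorProduct.map (AlgHom.id R H) Algebra.TensorProduct.includeLeft

/-- Leg embedding `x ↦ x₂₃` of `H ⊗ H` into `H ⊗ H ⊗ H`. -/
def ι₂₃ : H ⊗[R] H →ₐ[R] H ⊗[R] (H ⊗[R] H) :=
  Algebra.TensorProduct.includeRight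

/-- `Δ ⊗ id : H ⊗ H → H ⊗ H ⊗ H` (re-associated). -/
def Δ₁ : H ⊗[R] H →ₐ[R] H ⊗[R] (H ⊗[R] H) :=
  (Algebra.TensorProduct.assoc R R R H H H).toAlgHom.comp
    (Algebra.TensorProduct.map (Δ R H) (AlgHom.id R H))

/-- `id ⊗ Δ : H ⊗ H → H ⊗ H ⊗ H`. -/
def Δ₂ : H ⊗[R] H →ₐ[R] H ⊗[R] (H ⊗[R] H) :=
  Algebra.TensorProduct.map (AlgHom.id R H) (Δ R H)

/-- `ε ⊗ id : H ⊗ H → H`. -/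
def ε₁ : H ⊗[R] H →ₐ[R] H :=
  (Algebra.TensorProduct.lid R H).toAlgHom.comp
    (Algebra.TensorProduct.map (ε R H) (AlgHom.id R H))

/-- `id ⊗ ε : H ⊗ H → H`. -/
def ε₂ : H ⊗[R] H →ₐ[R] H :=
  (Algebra.TensorProduct.rid R R H).toAlgHom.comp
    (Algebra.TensorProduct.map (AlgHom.id R H) (ε R H))

/-- The twisted coproduct `Δ_F(b) = F · Δ(b) · F⁻¹` as a `k`-linear map. -/
def DeltaF (F Finv : H ⊗[R] H) : H →ₗ[R] H ⊗[R] H :=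
  (LinearMap.mulRight R Finv) ∘ₗ (LinearMap.mulLeft R F) ∘ₗ
    (Coalgebra.comul (R := R) (A := H))

/-- `β := μ((id⊗S)(F)) = F₁ · S(F₂)` (leg notation). -/
def betaF (F : H ⊗[R] H) : H :=
  LinearMap.mul' R H
    ((TensorProduct.map LinearMap.id (HopfAlgebra.antipode (R := R))) F)

/-- `β' := μ((S⊗id)(F⁻¹)) = S(F̄₁) · F̄₂` (leg notation). -/
def betaF' (G : H ⊗[R] H) : H :=
  LinearMap.mul' R H
    ((TensorProduct.map (HopfAlgebra.antipode (R := R)) LinearMap.id) G)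

/-- The twisted antipode `S_F(ξ) := β · S(ξ) · β'` as a `k`-linear map. -/
def SF (F Finv : H ⊗[R] H) : H →ₗ[R] H :=
  (LinearMap.mulRight R (betaF' R H Finv)) ∘ₗ
    (LinearMap.mulLeft R (betaF R H F)) ∘ₗ (HopfAlgebra.antipode (R := R))

end Stmt

namespace TwistAux
open TensorProduct Coalgebra
section ConvSec

variable {R : Type*} [CommRing R] {C : Type*} [AddCommMonoid C] [Module R C] [Coalgebra R C]
  {A : Type*} [Ring A] [Algebra R A]

/-- Convolution product of linear maps from a coalgebra to an algebra. -/
def conv (f g : C →ₗ[R] A) : C →ₗ[R] A :=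
  LinearMap.mul' R A ∘ₗ TensorProduct.map f g ∘ₗ Coalgebra.comul

lemma conv_apply (f g : C →ₗ[R] A) (c : C) :
    conv f g c = LinearMap.mul' R A (TensorProduct.map f g (Coalgebra.comul c)) := rfl

lemma conv_assoc (f g h : C →ₗ[R] A) : conv (conv f g) h = conv f (conv g h) := by
  have hrT : (Coalgebra.comul (R := R) (A := C)).rTensor C
      = TensorProduct.map Coalgebra.comul LinearMap.id := rfl
  have hlT : (Coalgebra.comul (R := R) (A := C)).lTensor C
      = TensorProduct.map LinearMap.id Coalgebra.comul := rfl
  have hL : TensorProduct.map (conv f g) h =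
      (TensorProduct.map (LinearMap.mul' R A ∘ₗ TensorProduct.map f g) h)
        ∘ₗ (Coalgebra.comul (R := R) (A := C)).rTensor C := by
    rw [hrT, ← TensorProduct.map_comp]
    simp [conv, LinearMap.comp_assoc]
  have hR : TensorProduct.map f (conv g h) =
      (TensorProduct.map f (LinearMap.mul' R A ∘ₗ TensorProduct.map g h))
        ∘ₗ (Coalgebra.comul (R := R) (A := C)).lTensor C := by
    rw [hlT, ← TensorProduct.map_comp]
    simp [conv, LinearMap.comp_assoc]
  have key : ∀ y : (C ⊗[R] C) ⊗[R] C,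
      LinearMap.mul' R A (TensorProduct.map f (LinearMap.mul' R A ∘ₗ TensorProduct.map g h)
        (TensorProduct.assoc R C C C y)) =
      LinearMap.mul' R A
        (TensorProduct.map (LinearMap.mul' R A ∘ₗ TensorProduct.map f g) h y) := by
    intro y
    induction y using TensorProduct.induction_on with
    | zero => simp
    | add a b ha hb => simp [ha, hb]
    | tmul a z =>
      induction a using TensorProduct.induction_on with
      | zero => simp
      | add a b ha hb =>
        simp only [add_tmul, map_add, ha, hb]
      | tmul x y => simp [mul_assoc]
  ext c
  simp only [conv_apply, hL, hR, LinearMap.comp_apply]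
  rw [← Coalgebra.coassoc_apply c, key]

lemma repr_smul_counit {c : C} {ι : Type*} (r : Coalgebra.Repr R c ι) :
    ∑ i ∈ r.index, Coalgebra.counit (R := R) (r.right i) • r.left i = c := by
  have h := congrArg (TensorProduct.rid R C) (Coalgebra.lTensor_counit_comul (R := R) c)
  rw [← r.eq, map_sum] at h
  simp only [map_sum, LinearMap.lTensor_tmul, TensorProduct.rid_tmul, one_smul] at h
  exact h

lemma repr_counit_smul {c : C} {ι : Type*} (r : Coalgebra.Repr R c ι) :
    ∑ i ∈ r.index, Coalgebra.counit (R := R) (r.left i) • r.right i = c := by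
  have h := congrArg (TensorProduct.lid R C) (Coalgebra.rTensor_counit_comul (R := R) c)
  rw [← r.eq, map_sum] at h
  simp only [map_sum, LinearMap.rTensor_tmul, TensorProduct.lid_tmul, one_smul] at h
  exact h

lemma conv_unit_right (f : C →ₗ[R] A) :
    conv f (Algebra.linearMap R A ∘ₗ Coalgebra.counit) = f := by
  ext c
  obtain r := Coalgebra.Repr.arbitrary R c
  rw [conv_apply, ← r.eq]
  rw [map_sum, map_sum]
  simp only [TensorProduct.map_tmul, LinearMap.mul'_apply, LinearMap.comp_apply,
    Algebra.linearMap_apply]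
  calc ∑ i ∈ r.index, f (r.left i) * algebraMap R A (Coalgebra.counit (r.right i))
      = ∑ i ∈ r.index, f (Coalgebra.counit (R := R) (r.right i) • r.left i) := by
        refine Finset.sum_congr rfl fun i _ => ?_
        rw [map_smul, Algebra.smul_def, Algebra.commutes]
    _ = f c := by rw [← map_sum, repr_smul_counit]

lemma conv_unit_left (f : C →ₗ[R] A) :
    conv (Algebra.linearMap R A ∘ₗ Coalgebra.counit) f = f := by
  ext c
  obtain r := Coalgebra.Repr.arbitrary R c
  rw [conv_apply, ← r.eq]
  rw [map_sum, map_sum]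
  simp only [TensorProduct.map_tmul, LinearMap.mul'_apply, LinearMap.comp_apply,
    Algebra.linearMap_apply]
  calc ∑ i ∈ r.index, algebraMap R A (Coalgebra.counit (r.left i)) * f (r.right i)
      = ∑ i ∈ r.index, f (Coalgebra.counit (R := R) (r.left i) • r.right i) := by
        refine Finset.sum_congr rfl fun i _ => ?_
        rw [map_smul, Algebra.smul_def]
    _ = f c := by rw [← map_sum, repr_counit_smul]

lemma conv_inv_unique {f g h : C →ₗ[R] A}
    (h1 : conv f g = Algebra.linearMap R A ∘ₗ Coalgebra.counit)
    (h2 : conv g h = Algebra.linearMap R A ∘ₗ Coalgebra.counit) : f = h := by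
  have := conv_assoc f g h
  rw [h1, h2, conv_unit_left, conv_unit_right] at this
  exact this.symm

end ConvSec
section HopfSec
variable (R : Type*) [CommRing R] (H : Type*) [Ring H] [HopfAlgebra R H]

private def Emap : (((H ⊗[R] H) ⊗[R] H) ⊗[R] ((H ⊗[R] H) ⊗[R] H)) →ₗ[R]
    (H ⊗[R] H) ⊗[R] ((H ⊗[R] H) ⊗[R] (H ⊗[R] H)) :=
  (TensorProduct.assoc R (H ⊗[R] H) (H ⊗[R] H) (H ⊗[R] H)).toLinearMap ∘ₗ
    TensorProduct.map (TensorProduct.tensorTensorTensorComm R H H H H).toLinearMap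
      LinearMap.id ∘ₗ
    (TensorProduct.tensorTensorTensorComm R (H ⊗[R] H) H (H ⊗[R] H) H).toLinearMap

@[simp] private lemma Emap_tmul (u1 u2 x2 v1 v2 y2 : H) :
    Emap R H (((u1 ⊗ₜ[R] u2) ⊗ₜ[R] x2) ⊗ₜ[R] ((v1 ⊗ₜ[R] v2) ⊗ₜ[R] y2)) =
      (u1 ⊗ₜ[R] v1) ⊗ₜ[R] ((u2 ⊗ₜ[R] v2) ⊗ₜ[R] (x2 ⊗ₜ[R] y2)) := by
  simp [Emap]

private def Emap' : ((H ⊗[R] (H ⊗[R] H)) ⊗[R] (H ⊗[R] (H ⊗[R] H))) →ₗ[R]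
    (H ⊗[R] H) ⊗[R] ((H ⊗[R] H) ⊗[R] (H ⊗[R] H)) :=
  TensorProduct.map LinearMap.id
      (TensorProduct.tensorTensorTensorComm R H H H H).toLinearMap ∘ₗ
    (TensorProduct.tensorTensorTensorComm R H (H ⊗[R] H) H (H ⊗[R] H)).toLinearMap

@[simp] private lemma Emap'_tmul (x1 u1 u2 y1 v1 v2 : H) :
    Emap' R H ((x1 ⊗ₜ[R] (u1 ⊗ₜ[R] u2)) ⊗ₜ[R] (y1 ⊗ₜ[R] (v1 ⊗ₜ[R] v2))) =
      (x1 ⊗ₜ[R] y1) ⊗ₜ[R] ((u1 ⊗ₜ[R] v1) ⊗ₜ[R] (u2 ⊗ₜ[R] v2)) := by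
  simp [Emap']

private def Gmap : ((R ⊗[R] H) ⊗[R] (R ⊗[R] H)) →ₗ[R] R ⊗[R] (H ⊗[R] H) :=
  TensorProduct.map (LinearMap.mul' R R) LinearMap.id ∘ₗ
    (TensorProduct.tensorTensorTensorComm R R H R H).toLinearMap

@[simp] private lemma Gmap_tmul (r s : R) (x y : H) :
    Gmap R H ((r ⊗ₜ[R] x) ⊗ₜ[R] (s ⊗ₜ[R] y)) = (r * s) ⊗ₜ[R] (x ⊗ₜ[R] y) := by
  simp [Gmap]

private def Gmap' : ((H ⊗[R] R) ⊗[R] (H ⊗[R] R)) →ₗ[R] (H ⊗[R] H) ⊗[R] R :=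
  TensorProduct.map LinearMap.id (LinearMap.mul' R R) ∘ₗ
    (TensorProduct.tensorTensorTensorComm R H R H R).toLinearMap

@[simp] private lemma Gmap'_tmul (r s : R) (x y : H) :
    Gmap' R H ((x ⊗ₜ[R] r) ⊗ₜ[R] (y ⊗ₜ[R] s)) = (x ⊗ₜ[R] y) ⊗ₜ[R] (r * s) := by
  simp [Gmap']

set_option maxHeartbeats 1600000 in
set_option synthInstance.maxHeartbeats 400000 in
/-- The tensor-square coalgebra (manual; mathlib's instance is same-universe only). -/
def tensorCoalgebra : Coalgebra R (H ⊗[R] H) := by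
  have hΔ₂ : ∀ x y : H, (CoalgebraStruct.comul (R := R) (A := H ⊗[R] H)) (x ⊗ₜ[R] y)
      = TensorProduct.tensorTensorTensorComm R H H H H
          ((Coalgebra.comul (R := R) x) ⊗ₜ[R] (Coalgebra.comul (R := R) y)) := by
    intro x y
    simp [AlgebraTensorModule.tensorTensorTensorComm_eq]
  have hε₂ : ∀ z w : H, (CoalgebraStruct.counit (R := R) (A := H ⊗[R] H)) (z ⊗ₜ[R] w)
      = Coalgebra.counit (R := R) z * Coalgebra.counit (R := R) w := by
    intro z w
    simp [mul_comm]
  refine { TensorProduct.instCoalgebraStruct (R := R) (A := H) (B := H) with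
    coassoc := ?_, rTensor_counit_comp_comul := ?_, lTensor_counit_comp_comul := ?_ }
  · -- coassoc
    have K1gen : ∀ (u v : H ⊗[R] H) (x2 y2 : H),
        TensorProduct.assoc R (H ⊗[R] H) (H ⊗[R] H) (H ⊗[R] H)
          ((TensorProduct.tensorTensorTensorComm R H H H H (u ⊗ₜ[R] v)) ⊗ₜ[R]
            (x2 ⊗ₜ[R] y2)) = Emap R H ((u ⊗ₜ[R] x2) ⊗ₜ[R] (v ⊗ₜ[R] y2)) := by
      intro u v x2 y2
      induction u using TensorProduct.induction_on with
      | zero => simp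
      | add a b ha hb => simp only [add_tmul, tmul_add, map_add, ha, hb]
      | tmul u1 u2 =>
        induction v using TensorProduct.induction_on with
        | zero => simp
        | add a b ha hb => simp only [add_tmul, tmul_add, map_add, ha, hb]
        | tmul v1 v2 => simp
    have K2gen : ∀ (u v : H ⊗[R] H) (x1 y1 : H),
        ((x1 ⊗ₜ[R] y1) ⊗ₜ[R]
            (TensorProduct.tensorTensorTensorComm R H H H H (u ⊗ₜ[R] v)) :
          (H ⊗[R] H) ⊗[R] ((H ⊗[R] H) ⊗[R] (H ⊗[R] H)))
          = Emap' R H ((x1 ⊗ₜ[R] u) ⊗ₜ[R] (y1 ⊗ₜ[R] v)) := by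
      intro u v x1 y1
      induction u using TensorProduct.induction_on with
      | zero => simp
      | add a b ha hb => simp only [add_tmul, tmul_add, map_add, ha, hb]
      | tmul u1 u2 =>
        induction v using TensorProduct.induction_on with
        | zero => simp
        | add a b ha hb => simp only [add_tmul, tmul_add, map_add, ha, hb]
        | tmul v1 v2 => simp
    have K3 : ∀ (u v : (H ⊗[R] H) ⊗[R] H),
        Emap R H (u ⊗ₜ[R] v) = Emap' R H ((TensorProduct.assoc R H H H u) ⊗ₜ[R]
          (TensorProduct.assoc R H H H v)) := by
      intro u v
      induction u using TensorProduct.induction_on with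
      | zero => simp
      | add a b ha hb => simp only [add_tmul, map_add, ha, hb]
      | tmul p q =>
        induction p using TensorProduct.induction_on with
        | zero => simp
        | add a b ha hb => simp only [add_tmul, map_add, ha, hb]
        | tmul p1 p2 =>
          induction v using TensorProduct.induction_on with
          | zero => simp
          | add a b ha hb => simp only [tmul_add, map_add, ha, hb]
          | tmul p' q' =>
            induction p' using TensorProduct.induction_on with
            | zero => simp
            | add a b ha hb => simp only [add_tmul, tmul_add, map_add, ha, hb]
            | tmul v1 v2 => simp
    apply TensorProduct.ext'
    intro a b
    simp only [LinearMap.comp_apply, LinearEquiv.coe_coe]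
    rw [hΔ₂ a b]
    have K1 : ∀ x y : H ⊗[R] H,
        TensorProduct.assoc R (H ⊗[R] H) (H ⊗[R] H) (H ⊗[R] H)
          ((CoalgebraStruct.comul (R := R) (A := H ⊗[R] H)).rTensor (H ⊗[R] H)
            (TensorProduct.tensorTensorTensorComm R H H H H (x ⊗ₜ[R] y))) =
        Emap R H (((Coalgebra.comul (R := R) (A := H)).rTensor H x) ⊗ₜ[R]
          ((Coalgebra.comul (R := R) (A := H)).rTensor H y)) := by
      intro x y
      induction x using TensorProduct.induction_on with
      | zero => simp
      | add a b ha hb => simp only [add_tmul, tmul_add, map_add, ha, hb]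
      | tmul x1 x2 =>
        induction y using TensorProduct.induction_on with
        | zero => simp
        | add a b ha hb => simp only [add_tmul, tmul_add, map_add, ha, hb]
        | tmul y1 y2 =>
          rw [TensorProduct.tensorTensorTensorComm_tmul, LinearMap.rTensor_tmul,
            hΔ₂ x1 y1, K1gen, LinearMap.rTensor_tmul, LinearMap.rTensor_tmul]
    have K2 : ∀ x y : H ⊗[R] H,
        (CoalgebraStruct.comul (R := R) (A := H ⊗[R] H)).lTensor (H ⊗[R] H)
            (TensorProduct.tensorTensorTensorComm R H H H H (x ⊗ₜ[R] y)) =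
        Emap' R H (((Coalgebra.comul (R := R) (A := H)).lTensor H x) ⊗ₜ[R]
          ((Coalgebra.comul (R := R) (A := H)).lTensor H y)) := by
      intro x y
      induction x using TensorProduct.induction_on with
      | zero => simp
      | add a b ha hb => simp only [add_tmul, tmul_add, map_add, ha, hb]
      | tmul x1 x2 =>
        induction y using TensorProduct.induction_on with
        | zero => simp
        | add a b ha hb => simp only [add_tmul, tmul_add, map_add, ha, hb]
        | tmul y1 y2 =>
          rw [TensorProduct.tensorTensorTensorComm_tmul, LinearMap.lTensor_tmul,
            hΔ₂ x2 y2, K2gen, LinearMap.lTensor_tmul, LinearMap.lTensor_tmul]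
    rw [K1, K2, K3]
    rw [Coalgebra.coassoc_apply, Coalgebra.coassoc_apply]
  · -- rTensor counit
    have K4 : ∀ x y : H ⊗[R] H,
        (CoalgebraStruct.counit (R := R) (A := H ⊗[R] H)).rTensor (H ⊗[R] H)
            (TensorProduct.tensorTensorTensorComm R H H H H (x ⊗ₜ[R] y)) =
        Gmap R H (((Coalgebra.counit (R := R) (A := H)).rTensor H x) ⊗ₜ[R]
          ((Coalgebra.counit (R := R) (A := H)).rTensor H y)) := by
      intro x y
      induction x using TensorProduct.induction_on with
      | zero => simp
      | add a b ha hb => simp only [add_tmul, tmul_add, map_add, ha, hb]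
      | tmul x1 x2 =>
        induction y using TensorProduct.induction_on with
        | zero => simp
        | add a b ha hb => simp only [add_tmul, tmul_add, map_add, ha, hb]
        | tmul y1 y2 =>
          rw [TensorProduct.tensorTensorTensorComm_tmul, LinearMap.rTensor_tmul,
            hε₂ x1 y1, LinearMap.rTensor_tmul, LinearMap.rTensor_tmul, Gmap_tmul]
    apply TensorProduct.ext'
    intro a b
    simp only [LinearMap.comp_apply]
    rw [hΔ₂ a b, K4, Coalgebra.rTensor_counit_comul, Coalgebra.rTensor_counit_comul,
      Gmap_tmul, one_mul]
    rfl
  · -- lTensor counit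
    have K5 : ∀ x y : H ⊗[R] H,
        (CoalgebraStruct.counit (R := R) (A := H ⊗[R] H)).lTensor (H ⊗[R] H)
            (TensorProduct.tensorTensorTensorComm R H H H H (x ⊗ₜ[R] y)) =
        Gmap' R H (((Coalgebra.counit (R := R) (A := H)).lTensor H x) ⊗ₜ[R]
          ((Coalgebra.counit (R := R) (A := H)).lTensor H y)) := by
      intro x y
      induction x using TensorProduct.induction_on with
      | zero => simp
      | add a b ha hb => simp only [add_tmul, tmul_add, map_add, ha, hb]
      | tmul x1 x2 =>
        induction y using TensorProduct.induction_on with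
        | zero => simp
        | add a b ha hb => simp only [add_tmul, tmul_add, map_add, ha, hb]
        | tmul y1 y2 =>
          rw [TensorProduct.tensorTensorTensorComm_tmul, LinearMap.lTensor_tmul,
            hε₂ x2 y2, LinearMap.lTensor_tmul, LinearMap.lTensor_tmul, Gmap'_tmul]
    apply TensorProduct.ext'
    intro a b
    simp only [LinearMap.comp_apply]
    rw [hΔ₂ a b, K5, Coalgebra.lTensor_counit_comul, Coalgebra.lTensor_counit_comul,
      Gmap'_tmul, one_mul]
    rfl

variable {R H} in
lemma antipode_one' : HopfAlgebra.antipode (R := R) (1 : H) = 1 := by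
  have := HopfAlgebra.mul_antipode_rTensor_comul_apply (R := R) (1 : H)
  rw [Bialgebra.comul_one] at this
  rw [show (1 : H ⊗[R] H) = (1:H) ⊗ₜ[R] (1:H) from rfl] at this
  simpa using this

set_option maxHeartbeats 1600000 in
set_option synthInstance.maxHeartbeats 400000 in
variable {R H} in
lemma antipode_mul' (a b : H) :
    HopfAlgebra.antipode (R := R) (a * b) =
      HopfAlgebra.antipode (R := R) b * HopfAlgebra.antipode (R := R) a := by
  letI : Coalgebra R (H ⊗[R] H) := tensorCoalgebra R H
  have key : (HopfAlgebra.antipode (R := R) ∘ₗ LinearMap.mul' R H : H ⊗[R] H →ₗ[R] H) =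
      LinearMap.mul' R H ∘ₗ
        TensorProduct.map (HopfAlgebra.antipode (R := R)) (HopfAlgebra.antipode (R := R)) ∘ₗ
        (TensorProduct.comm R H H).toLinearMap := by
    apply conv_inv_unique (g := LinearMap.mul' R H)
    · -- conv (S ∘ μ) μ = unit
      apply TensorProduct.ext'
      intro a b
      rw [conv_apply]
      have hc : Coalgebra.comul (R := R) (a ⊗ₜ[R] b) =
          TensorProduct.tensorTensorTensorComm R H H H H
            (Coalgebra.comul a ⊗ₜ[R] Coalgebra.comul b) := by
        simp [Coalgebra.comul, AlgebraTensorModule.tensorTensorTensorComm_eq]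
      erw [hc]
      have K1 : ∀ x y : H ⊗[R] H,
          LinearMap.mul' R H
            (TensorProduct.map (HopfAlgebra.antipode (R := R) ∘ₗ LinearMap.mul' R H)
              (LinearMap.mul' R H)
              (TensorProduct.tensorTensorTensorComm R H H H H (x ⊗ₜ[R] y))) =
          LinearMap.mul' R H
            (TensorProduct.map (HopfAlgebra.antipode (R := R)) LinearMap.id (x * y)) := by
        intro x y
        induction x using TensorProduct.induction_on with
        | zero => simp
        | add u v hu hv => simp only [add_tmul, map_add, add_mul, hu, hv]
        | tmul a1 a2 =>
          induction y using TensorProduct.induction_on with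
          | zero => simp
          | add u v hu hv => simp only [tmul_add, map_add, mul_add, hu, hv]
          | tmul b1 b2 =>
            simp [Algebra.TensorProduct.tmul_mul_tmul]
      rw [K1, ← Bialgebra.comul_mul]
      have := HopfAlgebra.mul_antipode_rTensor_comul_apply (R := R) (a * b)
      rw [show (HopfAlgebra.antipode (R := R)).rTensor H =
        TensorProduct.map (HopfAlgebra.antipode (R := R)) LinearMap.id from rfl] at this
      rw [this]
      simp [Coalgebra.counit, TensorProduct.counit_def]
      rw [← map_mul]
      exact congrArg (algebraMap R H) (show Coalgebra.counit (R := R) (A := H) a *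
        Coalgebra.counit (R := R) (A := H) b =
          CoalgebraStruct.counit (R := R) (A := H ⊗[R] H) (a ⊗ₜ[R] b) by simp [mul_comm])
    · -- conv μ (μ ∘ (S⊗S) ∘ comm) = unit
      apply TensorProduct.ext'
      intro a b
      rw [conv_apply]
      have hc : Coalgebra.comul (R := R) (a ⊗ₜ[R] b) =
          TensorProduct.tensorTensorTensorComm R H H H H
            (Coalgebra.comul a ⊗ₜ[R] Coalgebra.comul b) := by
        simp [Coalgebra.comul, AlgebraTensorModule.tensorTensorTensorComm_eq]
      erw [hc]
      obtain ra := Coalgebra.Repr.arbitrary R a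
      obtain rb := Coalgebra.Repr.arbitrary R b
      rw [← ra.eq, ← rb.eq]
      rw [sum_tmul]
      simp only [tmul_sum, map_sum, TensorProduct.tensorTensorTensorComm_tmul,
        TensorProduct.map_tmul, LinearMap.mul'_apply, LinearMap.comp_apply,
        LinearEquiv.coe_coe, TensorProduct.comm_tmul]
      have inner : ∀ i ∈ ra.index,
          ∑ j ∈ rb.index, (ra.left i * rb.left j) *
            (HopfAlgebra.antipode (R := R) (rb.right j) *
              HopfAlgebra.antipode (R := R) (ra.right i)) =
          algebraMap R H (Coalgebra.counit (R := R) b) *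
            (ra.left i * HopfAlgebra.antipode (R := R) (ra.right i)) := by
        intro i _
        calc ∑ j ∈ rb.index, (ra.left i * rb.left j) *
              (HopfAlgebra.antipode (R := R) (rb.right j) *
                HopfAlgebra.antipode (R := R) (ra.right i))
            = ra.left i * ((∑ j ∈ rb.index, rb.left j *
                HopfAlgebra.antipode (R := R) (rb.right j)) *
                  HopfAlgebra.antipode (R := R) (ra.right i)) := by
              rw [Finset.sum_mul, Finset.mul_sum]
              refine Finset.sum_congr rfl fun j _ => ?_
              rw [mul_assoc, mul_assoc]
          _ = ra.left i * (algebraMap R H (Coalgebra.counit (R := R) b) *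
                HopfAlgebra.antipode (R := R) (ra.right i)) := by
              rw [HopfAlgebra.sum_mul_antipode_eq_algebraMap_counit]
          _ = algebraMap R H (Coalgebra.counit (R := R) b) *
                (ra.left i * HopfAlgebra.antipode (R := R) (ra.right i)) := by
              rw [← mul_assoc, ← Algebra.commutes, mul_assoc]
      rw [Finset.sum_congr rfl inner, ← Finset.mul_sum, HopfAlgebra.sum_mul_antipode_eq_algebraMap_counit]
      simp [Coalgebra.counit, TensorProduct.counit_def, ← map_mul,
        mul_comm (Coalgebra.counit (R := R) b)]
      exact congrArg (algebraMap R H) (show Coalgebra.counit (R := R) (A := H) a *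
        Coalgebra.counit (R := R) (A := H) b =
          CoalgebraStruct.counit (R := R) (A := H ⊗[R] H) (a ⊗ₜ[R] b) by simp [mul_comm])
  have := LinearMap.congr_fun key (a ⊗ₜ[R] b)
  simpa using this


end HopfSec
end TwistAux


namespace Stmt
open TwistAux

variable (R : Type*) [CommRing R] (H : Type*) [Ring H] [HopfAlgebra R H]

-- ## simple computation lemmas
@[simp] lemma betaF_zero : betaF R H (0 : H ⊗[R] H) = 0 := by simp [betaF]
@[simp] lemma betaF'_zero : betaF' R H (0 : H ⊗[R] H) = 0 := by simp [betaF']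
@[simp] lemma betaF_add (a b : H ⊗[R] H) :
    betaF R H (a + b) = betaF R H a + betaF R H b := by simp [betaF]
@[simp] lemma betaF'_add (a b : H ⊗[R] H) :
    betaF' R H (a + b) = betaF' R H a + betaF' R H b := by simp [betaF']

@[simp] lemma betaF_tmul (f f' : H) :
    betaF R H (f ⊗ₜ[R] f') = f * HopfAlgebra.antipode (R := R) f' := by
  simp [betaF]

@[simp] lemma betaF'_tmul (g g' : H) :
    betaF' R H (g ⊗ₜ[R] g') = HopfAlgebra.antipode (R := R) g * g' := by
  simp [betaF']

lemma SF_apply (F Finv : H ⊗[R] H) (z : H) :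
    SF R H F Finv z = betaF R H F * HopfAlgebra.antipode (R := R) z * betaF' R H Finv := by
  simp [SF]

lemma DeltaF_apply (F Finv : H ⊗[R] H) (z : H) :
    DeltaF R H F Finv z = F * Coalgebra.comul (R := R) z * Finv := by
  simp [DeltaF]

-- ## Lemma A': the inner collapse on the left antipode side
lemma innerA (v u : H ⊗[R] H) :
    LinearMap.mul' R H (TensorProduct.map
        ((LinearMap.mulRight R (betaF' R H v)) ∘ₗ HopfAlgebra.antipode (R := R))
        LinearMap.id u) =
      LinearMap.mul' R H (TensorProduct.map (HopfAlgebra.antipode (R := R))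
        LinearMap.id (v * u)) := by
  induction u using TensorProduct.induction_on with
  | zero => simp
  | add a b ha hb => simp only [map_add, mul_add, ha, hb]
  | tmul f f' =>
    simp only [TensorProduct.map_tmul, LinearMap.comp_apply, LinearMap.mul'_apply,
      LinearMap.mulRight_apply, LinearMap.id_coe, id_eq]
    induction v using TensorProduct.induction_on with
    | zero => simp
    | add a b ha hb =>
      simp only [betaF'_add, mul_add, add_mul, map_add, ha, hb]
    | tmul g g' =>
      simp [Algebra.TensorProduct.tmul_mul_tmul, antipode_mul', mul_assoc]

-- ## Lemma B': the inner collapse on the right antipode side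
lemma innerB (v u : H ⊗[R] H) :
    LinearMap.mul' R H (TensorProduct.map LinearMap.id
        ((LinearMap.mulLeft R (betaF R H u)) ∘ₗ HopfAlgebra.antipode (R := R)) v) =
      LinearMap.mul' R H (TensorProduct.map LinearMap.id
        (HopfAlgebra.antipode (R := R)) (v * u)) := by
  induction v using TensorProduct.induction_on with
  | zero => simp
  | add a b ha hb => simp only [map_add, add_mul, ha, hb]
  | tmul g g' =>
    simp only [TensorProduct.map_tmul, LinearMap.comp_apply, LinearMap.mul'_apply,
      LinearMap.mulLeft_apply, LinearMap.id_coe, id_eq]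
    induction u using TensorProduct.induction_on with
    | zero => simp
    | add a b ha hb =>
      simp only [betaF_add, mul_add, add_mul, map_add, ha, hb]
    | tmul f f' =>
      simp [Algebra.TensorProduct.tmul_mul_tmul, antipode_mul', mul_assoc]

-- ## the trilinear evaluation x ⊗ (y ⊗ z) ↦ x * (S y * z)
def m₃ : H ⊗[R] (H ⊗[R] H) →ₗ[R] H :=
  LinearMap.mul' R H ∘ₗ TensorProduct.map LinearMap.id
    (LinearMap.mul' R H ∘ₗ TensorProduct.map (HopfAlgebra.antipode (R := R)) LinearMap.id)

@[simp] lemma m₃_tmul (x y z : H) :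
    m₃ R H (x ⊗ₜ[R] (y ⊗ₜ[R] z)) = x * (HopfAlgebra.antipode (R := R) y * z) := by
  simp [m₃]

-- ## Lemma C-left : m₃ (v₂₃ · u₁₂) = β(u) · β'(v)
lemma m₃_leg (u v : H ⊗[R] H) :
    m₃ R H (ι₂₃ R H v * ι₁₂ R H u) = betaF R H u * betaF' R H v := by
  induction u using TensorProduct.induction_on with
  | zero => simp
  | add a b ha hb => simp only [map_add, mul_add, add_mul, ha, hb, betaF_add]
  | tmul f f' =>
    induction v using TensorProduct.induction_on with
    | zero => simp
    | add a b ha hb => simp only [map_add, mul_add, add_mul, ha, hb, betaF'_add]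
    | tmul g g' =>
      have h1 : ι₂₃ R H (g ⊗ₜ[R] g') = (1 : H) ⊗ₜ[R] (g ⊗ₜ[R] g') := rfl
      have h2 : ι₁₂ R H (f ⊗ₜ[R] f') = f ⊗ₜ[R] (f' ⊗ₜ[R] (1 : H)) := rfl
      rw [h1, h2, Algebra.TensorProduct.tmul_mul_tmul,
        Algebra.TensorProduct.tmul_mul_tmul, m₃_tmul]
      simp [antipode_mul', mul_assoc]

lemma scalar_shuffle (c d : R) (x y : H) :
    (x * algebraMap R H c) * (algebraMap R H d * y) = (d • x) * (c • y) := by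
  have hL : (x * algebraMap R H c) * (algebraMap R H d * y)
      = algebraMap R H (c * d) * (x * y) := by
    rw [mul_assoc x, ← mul_assoc (algebraMap R H c), ← map_mul, ← mul_assoc x,
      ← Algebra.commutes (c * d) x, mul_assoc]
  have hR : (d • x) * (c • y) = algebraMap R H (c * d) * (x * y) := by
    rw [Algebra.smul_def, Algebra.smul_def, mul_assoc, ← mul_assoc x,
      ← Algebra.commutes c x, mul_assoc (algebraMap R H c), ← mul_assoc, ← map_mul,
      mul_comm d c]
  exact hL.trans hR.symm

-- ## Lemma C-right : m₃ (Δ₂ u · Δ₁ v) = ε₂ u · ε₁ v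
lemma m₃_Δ (u v : H ⊗[R] H) :
    m₃ R H (Δ₂ R H u * Δ₁ R H v) = ε₂ R H u * ε₁ R H v := by
  induction u using TensorProduct.induction_on with
  | zero => simp
  | add a b ha hb => simp only [map_add, mul_add, add_mul, ha, hb]
  | tmul f f' =>
    induction v using TensorProduct.induction_on with
    | zero => simp
    | add a b ha hb => simp only [map_add, mul_add, add_mul, ha, hb]
    | tmul g g' =>
      have h2 : Δ₂ R H (f ⊗ₜ[R] f') = f ⊗ₜ[R] (Coalgebra.comul (R := R) f') := by
        simp [Δ₂, Δ]
      have h1 : Δ₁ R H (g ⊗ₜ[R] g') =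
          (Algebra.TensorProduct.assoc R R R H H H) ((Coalgebra.comul (R := R) g) ⊗ₜ[R] g') := by
        simp [Δ₁, Δ]
      obtain rf := Coalgebra.Repr.arbitrary R f'
      obtain rg := Coalgebra.Repr.arbitrary R g
      rw [h1, h2, ← rf.eq, ← rg.eq, TensorProduct.tmul_sum, TensorProduct.sum_tmul, map_sum]
      simp only [Algebra.TensorProduct.assoc_tmul]
      rw [Finset.sum_mul_sum, map_sum]
      simp only [map_sum, Algebra.TensorProduct.tmul_mul_tmul, m₃_tmul, antipode_mul']
      have hterm : ∀ k l, (f * rg.left l) *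
          ((HopfAlgebra.antipode (R := R) (rg.right l) *
            HopfAlgebra.antipode (R := R) (rf.left k)) * (rf.right k * g')) =
          (f * (rg.left l * HopfAlgebra.antipode (R := R) (rg.right l))) *
            ((HopfAlgebra.antipode (R := R) (rf.left k) * rf.right k) * g') := by
        intro k l
        simp only [mul_assoc]
      calc ∑ k ∈ rf.index, ∑ l ∈ rg.index, (f * rg.left l) *
              ((HopfAlgebra.antipode (R := R) (rg.right l) *
                HopfAlgebra.antipode (R := R) (rf.left k)) * (rf.right k * g'))
          = ∑ k ∈ rf.index, (f * algebraMap R H (Coalgebra.counit (R := R) g)) *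
              ((HopfAlgebra.antipode (R := R) (rf.left k) * rf.right k) * g') := by
            refine Finset.sum_congr rfl fun k _ => ?_
            rw [Finset.sum_congr rfl fun l _ => hterm k l, ← Finset.sum_mul,
              ← Finset.mul_sum, HopfAlgebra.sum_mul_antipode_eq_algebraMap_counit]
        _ = (f * algebraMap R H (Coalgebra.counit (R := R) g)) *
              ((algebraMap R H (Coalgebra.counit (R := R) f')) * g') := by
            rw [← Finset.mul_sum, ← Finset.sum_mul, HopfAlgebra.sum_antipode_mul_eq_algebraMap_counit]
        _ = ε₂ R H (f ⊗ₜ[R] f') * ε₁ R H (g ⊗ₜ[R] g') := by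
            rw [scalar_shuffle]
            have he2 : ε₂ R H (f ⊗ₜ[R] f') = Coalgebra.counit (R := R) f' • f := by
              simp [ε₂, ε, Algebra.TensorProduct.rid_tmul]
            have he1 : ε₁ R H (g ⊗ₜ[R] g') = Coalgebra.counit (R := R) g • g' := by
              simp [ε₁, ε, Algebra.TensorProduct.lid_tmul]
            rw [he2, he1]

-- ## β·β′ = 1
lemma beta_beta' (F Finv : H ⊗[R] H) (hF : F * Finv = 1) (hF' : Finv * F = 1)
    (hnorm₁ : ε₁ R H F = 1) (hnorm₂ : ε₂ R H F = 1)
    (hcoc : ι₁₂ R H F * Δ₁ R H F = ι₂₃ R H F * Δ₂ R H F) :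
    betaF R H F * betaF' R H Finv = 1 := by
  have hY : ι₂₃ R H Finv * ι₁₂ R H F = Δ₂ R H F * Δ₁ R H Finv := by
    have e1 : Δ₁ R H F * Δ₁ R H Finv = 1 := by rw [← map_mul, hF, map_one]
    have e2 : ι₂₃ R H Finv * ι₂₃ R H F = 1 := by rw [← map_mul, hF', map_one]
    calc ι₂₃ R H Finv * ι₁₂ R H F
        = ι₂₃ R H Finv * ((ι₁₂ R H F * Δ₁ R H F) * Δ₁ R H Finv) := by
          rw [mul_assoc (ι₁₂ R H F), e1, mul_one]
      _ = ι₂₃ R H Finv * ((ι₂₃ R H F * Δ₂ R H F) * Δ₁ R H Finv) := by rw [hcoc]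
      _ = (ι₂₃ R H Finv * ι₂₃ R H F) * (Δ₂ R H F * Δ₁ R H Finv) := by
          rw [mul_assoc (ι₂₃ R H F), ← mul_assoc]
      _ = Δ₂ R H F * Δ₁ R H Finv := by rw [e2, one_mul]
  calc betaF R H F * betaF' R H Finv
      = m₃ R H (ι₂₃ R H Finv * ι₁₂ R H F) := (m₃_leg R H F Finv).symm
    _ = m₃ R H (Δ₂ R H F * Δ₁ R H Finv) := by rw [hY]
    _ = ε₂ R H F * ε₁ R H Finv := m₃_Δ R H F Finv
    _ = 1 := by
        have hε₁Finv : ε₁ R H Finv = 1 := by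
          have h := congrArg (ε₁ R H) hF'
          rw [map_mul, map_one, hnorm₁, mul_one] at h
          exact h
        rw [hnorm₂, hε₁Finv, one_mul]

-- ## auxiliary sandwich functionals
def Aval (G u : H ⊗[R] H) : H :=
  LinearMap.mul' R H (TensorProduct.map
    ((LinearMap.mulRight R (betaF' R H G)) ∘ₗ HopfAlgebra.antipode (R := R)) LinearMap.id u)

@[simp] lemma Aval_tmul (G : H ⊗[R] H) (f f' : H) :
    Aval R H G (f ⊗ₜ[R] f') = HopfAlgebra.antipode (R := R) f * betaF' R H G * f' := by
  simp [Aval]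

@[simp] lemma Aval_zero (G : H ⊗[R] H) : Aval R H G 0 = 0 := by simp [Aval]

@[simp] lemma Aval_add (G a b : H ⊗[R] H) :
    Aval R H G (a + b) = Aval R H G a + Aval R H G b := by simp [Aval]

lemma Aval_eq_one (F Finv : H ⊗[R] H) (hF' : Finv * F = 1) : Aval R H Finv F = 1 := by
  rw [Aval, innerA, hF', Algebra.TensorProduct.one_def]
  simp [antipode_one']

def Bval (F w : H ⊗[R] H) : H :=
  LinearMap.mul' R H (TensorProduct.map LinearMap.id
    ((LinearMap.mulLeft R (betaF R H F)) ∘ₗ HopfAlgebra.antipode (R := R)) w)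

@[simp] lemma Bval_tmul (F : H ⊗[R] H) (g g' : H) :
    Bval R H F (g ⊗ₜ[R] g') = g * (betaF R H F * HopfAlgebra.antipode (R := R) g') := by
  simp [Bval]

@[simp] lemma Bval_zero (F : H ⊗[R] H) : Bval R H F 0 = 0 := by simp [Bval]

@[simp] lemma Bval_add (F a b : H ⊗[R] H) :
    Bval R H F (a + b) = Bval R H F a + Bval R H F b := by simp [Bval]

lemma Bval_eq_one (F Finv : H ⊗[R] H) (hF' : Finv * F = 1) : Bval R H F Finv = 1 := by
  rw [Bval, innerB, hF', Algebra.TensorProduct.one_def]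
  simp [antipode_one']

def Phi1 (w : H ⊗[R] H) (c : H) : H :=
  LinearMap.mul' R H (TensorProduct.map
    ((LinearMap.mulRight R c) ∘ₗ HopfAlgebra.antipode (R := R)) LinearMap.id w)

@[simp] lemma Phi1_tmul (c g g' : H) :
    Phi1 R H (g ⊗ₜ[R] g') c = HopfAlgebra.antipode (R := R) g * c * g' := by
  simp [Phi1]

@[simp] lemma Phi1_zero (c : H) : Phi1 R H 0 c = 0 := by simp [Phi1]

@[simp] lemma Phi1_add (a b : H ⊗[R] H) (c : H) :
    Phi1 R H (a + b) c = Phi1 R H a c + Phi1 R H b c := by simp [Phi1]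

lemma Phi1_sum (w : H ⊗[R] H) {ι : Type*} (s : Finset ι) (c : ι → H) :
    Phi1 R H w (∑ i ∈ s, c i) = ∑ i ∈ s, Phi1 R H w (c i) := by
  induction w using TensorProduct.induction_on with
  | zero => simp
  | add a b ha hb => simp [ha, hb, Finset.sum_add_distrib]
  | tmul g g' => simp [Finset.mul_sum, Finset.sum_mul]

lemma Phi1_alg (w : H ⊗[R] H) (r : R) :
    Phi1 R H w (algebraMap R H r) = algebraMap R H r * betaF' R H w := by
  induction w using TensorProduct.induction_on with
  | zero => simp
  | add a b ha hb => simp [ha, hb, mul_add]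
  | tmul g g' =>
    rw [Phi1_tmul, betaF'_tmul, ← Algebra.commutes r, mul_assoc]

def Phi2 (u : H ⊗[R] H) (c : H) : H :=
  LinearMap.mul' R H (TensorProduct.map
    (LinearMap.mulRight R c) (HopfAlgebra.antipode (R := R)) u)

@[simp] lemma Phi2_tmul (c f f' : H) :
    Phi2 R H (f ⊗ₜ[R] f') c = f * c * HopfAlgebra.antipode (R := R) f' := by
  simp [Phi2]

@[simp] lemma Phi2_zero (c : H) : Phi2 R H 0 c = 0 := by simp [Phi2]

@[simp] lemma Phi2_add (a b : H ⊗[R] H) (c : H) :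
    Phi2 R H (a + b) c = Phi2 R H a c + Phi2 R H b c := by simp [Phi2]

lemma Phi2_sum (u : H ⊗[R] H) {ι : Type*} (s : Finset ι) (c : ι → H) :
    Phi2 R H u (∑ i ∈ s, c i) = ∑ i ∈ s, Phi2 R H u (c i) := by
  induction u using TensorProduct.induction_on with
  | zero => simp
  | add a b ha hb => simp [ha, hb, Finset.sum_add_distrib]
  | tmul f f' => simp [Finset.mul_sum, Finset.sum_mul]

lemma Phi2_alg (u : H ⊗[R] H) (r : R) :
    Phi2 R H u (algebraMap R H r) = algebraMap R H r * betaF R H u := by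
  induction u using TensorProduct.induction_on with
  | zero => simp
  | add a b ha hb => simp [ha, hb, mul_add]
  | tmul f f' =>
    rw [Phi2_tmul, betaF_tmul, ← Algebra.commutes r, mul_assoc]

-- ## the two sandwich identities
lemma sandwich_left (F Finv : H ⊗[R] H) (u w : H ⊗[R] H) (x y : H) :
    LinearMap.mul' R H (TensorProduct.map (SF R H F Finv) LinearMap.id
        (u * (x ⊗ₜ[R] y) * w)) =
      betaF R H F * Phi1 R H w
        (HopfAlgebra.antipode (R := R) x * Aval R H Finv u * y) := by
  induction w using TensorProduct.induction_on with
  | zero => simp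
  | add a b ha hb => simp only [mul_add, map_add, ha, hb, Phi1_add]
  | tmul g g' =>
    induction u using TensorProduct.induction_on with
    | zero => simp
    | add a b ha hb =>
      simp only [add_mul, map_add, ha, hb, Aval_add, mul_add, Phi1_tmul, add_mul]
    | tmul f f' =>
      rw [Algebra.TensorProduct.tmul_mul_tmul, Algebra.TensorProduct.tmul_mul_tmul]
      rw [TensorProduct.map_tmul, LinearMap.mul'_apply, SF_apply, Aval_tmul, Phi1_tmul]
      rw [antipode_mul', antipode_mul']
      simp only [LinearMap.id_coe, id_eq, mul_assoc]

lemma sandwich_right (F Finv : H ⊗[R] H) (u w : H ⊗[R] H) (x y : H) :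
    LinearMap.mul' R H (TensorProduct.map LinearMap.id (SF R H F Finv)
        (u * (x ⊗ₜ[R] y) * w)) =
      Phi2 R H u (x * Bval R H F w * HopfAlgebra.antipode (R := R) y) *
        betaF' R H Finv := by
  induction u using TensorProduct.induction_on with
  | zero => simp
  | add a b ha hb => simp only [add_mul, map_add, ha, hb, Phi2_add, add_mul]
  | tmul f f' =>
    induction w using TensorProduct.induction_on with
    | zero => simp
    | add a b ha hb =>
      simp only [mul_add, map_add, ha, hb, Bval_add, Phi2_tmul, add_mul]
    | tmul g g' =>
      rw [Algebra.TensorProduct.tmul_mul_tmul, Algebra.TensorProduct.tmul_mul_tmul]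
      rw [TensorProduct.map_tmul, LinearMap.mul'_apply, SF_apply, Bval_tmul, Phi2_tmul]
      rw [antipode_mul', antipode_mul']
      simp only [LinearMap.id_coe, id_eq, mul_assoc]

/-- **The twisted antipode.**  For a Drinfel'd twist `F` (with two-sided inverse
`Finv`) on a Hopf algebra `H`, the twisted antipode `S_F` satisfies the antipode
axioms for the twisted bialgebra `(H, Δ_F, ε)`:
`μ∘(S_F⊗id)∘Δ_F = η∘ε = μ∘(id⊗S_F)∘Δ_F`.  Consequently `(H, μ, η, Δ_F, ε, S_F)` is a
Hopf algebra. -/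
theorem twisted_antipode
    (F Finv : H ⊗[R] H)
    (hF : F * Finv = 1) (hF' : Finv * F = 1)
    (hnorm₁ : ε₁ R H F = 1) (hnorm₂ : ε₂ R H F = 1)
    (hcoc : ι₁₂ R H F * Δ₁ R H F = ι₂₃ R H F * Δ₂ R H F) :
    (∀ ξ : H,
      LinearMap.mul' R H
          ((TensorProduct.map (SF R H F Finv) LinearMap.id) (DeltaF R H F Finv ξ)) =
        algebraMap R H (Coalgebra.counit (R := R) ξ)) ∧
    (∀ ξ : H,
      LinearMap.mul' R H
          ((TensorProduct.map LinearMap.id (SF R H F Finv)) (DeltaF R H F Finv ξ)) =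
        algebraMap R H (Coalgebra.counit (R := R) ξ)) := by
  have hββ' := beta_beta' R H F Finv hF hF' hnorm₁ hnorm₂ hcoc
  have hAF := Aval_eq_one R H F Finv hF'
  have hBF := Bval_eq_one R H F Finv hF'
  constructor
  · intro ξ
    obtain r := Coalgebra.Repr.arbitrary R ξ
    rw [DeltaF_apply, ← r.eq, Finset.mul_sum, Finset.sum_mul, map_sum, map_sum]
    have hterm : ∀ k ∈ r.index,
        LinearMap.mul' R H (TensorProduct.map (SF R H F Finv) LinearMap.id
          (F * (r.left k ⊗ₜ[R] r.right k) * Finv)) =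
        betaF R H F * Phi1 R H Finv
          (HopfAlgebra.antipode (R := R) (r.left k) * r.right k) := by
      intro k _
      rw [sandwich_left, hAF, mul_one]
    rw [Finset.sum_congr rfl hterm, ← Finset.mul_sum, ← Phi1_sum,
      HopfAlgebra.sum_antipode_mul_eq_algebraMap_counit r, Phi1_alg, ← mul_assoc,
      ← Algebra.commutes (Coalgebra.counit (R := R) ξ) (betaF R H F),
      mul_assoc, hββ', mul_one]
  · intro ξ
    obtain r := Coalgebra.Repr.arbitrary R ξ
    rw [DeltaF_apply, ← r.eq, Finset.mul_sum, Finset.sum_mul, map_sum, map_sum]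
    have hterm : ∀ k ∈ r.index,
        LinearMap.mul' R H (TensorProduct.map LinearMap.id (SF R H F Finv)
          (F * (r.left k ⊗ₜ[R] r.right k) * Finv)) =
        Phi2 R H F (r.left k * HopfAlgebra.antipode (R := R) (r.right k)) *
          betaF' R H Finv := by
      intro k _
      rw [sandwich_right, hBF, mul_one]
    rw [Finset.sum_congr rfl hterm, ← Finset.sum_mul, ← Phi2_sum,
      HopfAlgebra.sum_mul_antipode_eq_algebraMap_counit r, Phi2_alg, mul_assoc, hββ', mul_one]


end Stmt
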